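/- Let G be a finite group, p a prime number, and H, K subgroups of G. Then the intersection H ∩ K is a p-subnormal subgroup of both H and K if and only if O^p(H) = O^p(K) (equality as subgroups of G). -/

import Mathlib

/-- `K` is a `p`-subnormal subgroup of `H` (both viewed as subgroups of an ambient group
`G`): there is a chain of subgroups `K = K₀ ≤ K₁ ≤ ⋯ ≤ K_t = H` in which each `K_i` is a
normal subgroup of `K_{i+1}` of index `p`. -/
def IsPSubnormalIn {G : Type*} [Group G] (p : ℕ) (K H : Subgroup G) : Prop :=
  ∃ (t : ℕ) (f : Fin (t + 1) → Subgroup G),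
    f 0 = K ∧ f (Fin.last t) = H ∧
    ∀ i : Fin t, f i.castSucc ≤ f i.succ ∧
      ((f i.castSucc).subgroupOf (f i.succ)).Normal ∧
      (f i.castSucc).relIndex (f i.succ) = p

/-- `O^p(G)`: the intersection of all normal subgroups `N ⊴ G` such that `G/N` is a
`p`-group. -/
def pResidual (p : ℕ) (G : Type*) [Group G] : Subgroup G :=
  sInf {N : Subgroup G | ∃ h : N.Normal, letI := h; IsPGroup p (G ⧸ N)}

/-- For a subgroup `H ≤ G`, the subgroup `O^p(H)` of `H` regarded as a subgroup of `G`. -/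
def pResidualIn {G : Type*} [Group G] (p : ℕ) (H : Subgroup G) : Subgroup G :=
  (pResidual p H).map H.subtype

section Aux

open Subgroup

variable {G : Type*} [Group G] {p : ℕ}

/-- The set of `p'`-elements. -/
def pPrimeSet (p : ℕ) (G : Type*) [Group G] : Set G := {x : G | ¬ p ∣ orderOf x}

lemma normal_closure_pPrimeSet : (Subgroup.closure (pPrimeSet p G)).Normal := by
  constructor
  intro n hn g
  have h : Subgroup.map (MulEquiv.toMonoidHom (MulAut.conj g)) (Subgroup.closure (pPrimeSet p G))
      ≤ Subgroup.closure (pPrimeSet p G) := by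
    rw [MonoidHom.map_closure]
    apply Subgroup.closure_mono
    rintro x ⟨y, hy, rfl⟩
    show ¬ p ∣ orderOf ((MulAut.conj g).toMonoidHom y)
    rw [orderOf_injective _ (MulEquiv.injective _) y]
    exact hy
  exact h ⟨n, hn, rfl⟩

lemma isPGroup_quotient_closure_pPrimeSet [Finite G] (hp : p.Prime) :
    letI := (normal_closure_pPrimeSet (G := G) (p := p))
    IsPGroup p (G ⧸ Subgroup.closure (pPrimeSet p G)) := by
  letI := (normal_closure_pPrimeSet (G := G) (p := p))
  intro y
  obtain ⟨x, rfl⟩ := QuotientGroup.mk_surjective y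
  refine ⟨(orderOf x).factorization p, ?_⟩
  have hx : x ^ (p ^ (orderOf x).factorization p) ∈ Subgroup.closure (pPrimeSet p G) := by
    apply Subgroup.subset_closure
    have hord : orderOf x ≠ 0 := (orderOf_pos x).ne'
    have hdvd : p ^ (orderOf x).factorization p ∣ orderOf x := Nat.ordProj_dvd _ _
    have h2 : orderOf (x ^ (p ^ (orderOf x).factorization p)) = ordCompl[p] (orderOf x) := by
      rw [orderOf_pow, Nat.gcd_eq_right hdvd]
    simpa [pPrimeSet, h2] using Nat.not_dvd_ordCompl hp hord
  rw [← QuotientGroup.mk_pow]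
  exact (QuotientGroup.eq_one_iff _).mpr hx

lemma pPrimeSet_subset (hp : p.Prime) {N : Subgroup G} (hN : N.Normal)
    (h : letI := hN; IsPGroup p (G ⧸ N)) :
    pPrimeSet p G ⊆ N := by
  letI := hN
  intro x hx
  obtain ⟨k, hk⟩ := h ((x : G ⧸ N))
  rw [← QuotientGroup.mk_pow] at hk
  have h1 : orderOf ((x : G) : G ⧸ N) ∣ p ^ k := orderOf_dvd_of_pow_eq_one hk
  have h2 : orderOf ((x : G) : G ⧸ N) ∣ orderOf x :=
    orderOf_map_dvd (QuotientGroup.mk' N) x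
  have hcop : Nat.Coprime (p ^ k) (orderOf x) :=
    Nat.Coprime.pow_left _ ((Nat.Prime.coprime_iff_not_dvd hp).mpr hx)
  have h3 : orderOf ((x : G) : G ⧸ N) = 1 :=
    Nat.eq_one_of_dvd_coprimes hcop h1 h2
  rw [orderOf_eq_one_iff] at h3
  exact (QuotientGroup.eq_one_iff _).mp h3

lemma pResidual_eq_closure [Finite G] (hp : p.Prime) :
    pResidual p G = Subgroup.closure (pPrimeSet p G) := by
  apply le_antisymm
  · exact sInf_le ⟨normal_closure_pPrimeSet, isPGroup_quotient_closure_pPrimeSet hp⟩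
  · refine le_sInf ?_
    rintro N ⟨hN, hpg⟩
    exact (Subgroup.closure_le N).mpr (pPrimeSet_subset hp hN hpg)

lemma pResidualIn_eq_closure [Finite G] (hp : p.Prime) (H : Subgroup G) :
    pResidualIn p H = Subgroup.closure {g : G | g ∈ H ∧ ¬ p ∣ orderOf g} := by
  rw [pResidualIn, pResidual_eq_closure hp, MonoidHom.map_closure]
  congr 1
  ext g
  constructor
  · rintro ⟨y, hy, rfl⟩
    exact ⟨y.2, by simpa [pPrimeSet, Subgroup.orderOf_coe] using hy⟩
  · rintro ⟨hgH, hg⟩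
    exact ⟨⟨g, hgH⟩, by simpa [pPrimeSet, Subgroup.orderOf_mk] using hg, rfl⟩

/-- In a one-step `p`-normal extension, the `p'`-elements agree. -/
lemma step_pPrime_eq [Finite G] (hp : p.Prime) {A B : Subgroup G} (hAB : A ≤ B)
    (hnorm : ((A.subgroupOf B)).Normal) (hrel : A.relIndex B = p) :
    {g : G | g ∈ A ∧ ¬ p ∣ orderOf g} = {g : G | g ∈ B ∧ ¬ p ∣ orderOf g} := by
  ext g
  simp only [Set.mem_setOf_eq, and_congr_left_iff]
  intro hg
  constructor
  · exact fun h => hAB h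
  · intro hgB
    letI := hnorm
    set y : B ⧸ A.subgroupOf B := ((⟨g, hgB⟩ : B) : B ⧸ A.subgroupOf B) with hy
    have hcard : Nat.card (B ⧸ A.subgroupOf B) = p := hrel
    have h1 : orderOf y ∣ p := hcard ▸ orderOf_dvd_natCard y
    have h2 : orderOf y ∣ orderOf g := by
      have := orderOf_map_dvd (QuotientGroup.mk' (A.subgroupOf B)) (⟨g, hgB⟩ : B)
      simpa [Subgroup.orderOf_mk] using this
    have h3 : orderOf y = 1 := by
      rcases (Nat.dvd_prime hp).mp h1 with h | h
      · exact h
      · exact absurd (h ▸ h2) hg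
    rw [orderOf_eq_one_iff] at h3
    have : (⟨g, hgB⟩ : B) ∈ A.subgroupOf B := (QuotientGroup.eq_one_iff _).mp h3
    exact this

lemma step_pResidualIn_eq [Finite G] (hp : p.Prime) {A B : Subgroup G} (hAB : A ≤ B)
    (hnorm : ((A.subgroupOf B)).Normal) (hrel : A.relIndex B = p) :
    pResidualIn p A = pResidualIn p B := by
  rw [pResidualIn_eq_closure hp, pResidualIn_eq_closure hp,
    step_pPrime_eq hp hAB hnorm hrel]

lemma pResidualIn_eq_of_subnormal [Finite G] (hp : p.Prime) {A B : Subgroup G}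
    (h : IsPSubnormalIn p A B) : pResidualIn p A = pResidualIn p B := by
  obtain ⟨t, f, h0, hlast, hstep⟩ := h
  have key : ∀ i : Fin (t + 1), pResidualIn p (f 0) = pResidualIn p (f i) := by
    intro i
    induction i using Fin.induction with
    | zero => rfl
    | succ j ih =>
      obtain ⟨hle, hn, hr⟩ := hstep j
      exact ih.trans (step_pResidualIn_eq hp hle hn hr)
  rw [← h0, ← hlast]
  exact key (Fin.last t)

lemma isPSubnormalIn_refl (A : Subgroup G) : IsPSubnormalIn p A A :=
  ⟨0, fun _ => A, rfl, rfl, fun i => i.elim0⟩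

lemma isPSubnormalIn_cons {A B C : Subgroup G} (hAB : A ≤ B)
    (hnorm : ((A.subgroupOf B)).Normal) (hrel : A.relIndex B = p)
    (h : IsPSubnormalIn p B C) : IsPSubnormalIn p A C := by
  obtain ⟨t, f, h0, hlast, hstep⟩ := h
  refine ⟨t + 1, Fin.cons A f, Fin.cons_zero _ _, ?_, ?_⟩
  · rw [← hlast, show Fin.last (t + 1) = (Fin.last t).succ from rfl, Fin.cons_succ]
  · intro i
    induction i using Fin.cases with
    | zero =>
      have e2 : (Fin.cons A f : Fin (t + 2) → Subgroup G) ((0 : Fin (t + 1)).succ) = B :=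
        (Fin.cons_succ (α := fun _ => Subgroup G) A f 0).trans h0
      have e1 : (Fin.cons A f : Fin (t + 2) → Subgroup G) ((0 : Fin (t + 1)).castSucc) = A := by
        rw [Fin.castSucc_zero]; exact Fin.cons_zero _ _
      rw [e1, e2]
      exact ⟨hAB, hnorm, hrel⟩
    | succ j =>
      simp only [← Fin.succ_castSucc, Fin.cons_succ]
      exact hstep j


lemma step_comap {X P : Type*} [Group X] [Group P] {p : ℕ} (π : X →* P)
    (hsurj : Function.Surjective π) {A B : Subgroup P} (hAB : A ≤ B)
    (hn : (A.subgroupOf B).Normal) (hr : A.relIndex B = p) :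
    A.comap π ≤ B.comap π ∧ ((A.comap π).subgroupOf (B.comap π)).Normal ∧
      (A.comap π).relIndex (B.comap π) = p := by
  refine ⟨Subgroup.comap_mono hAB, ?_, ?_⟩
  · rw [Subgroup.normal_subgroupOf_iff (Subgroup.comap_mono hAB)]
    intro h k hh hk
    simp only [Subgroup.mem_comap, map_mul, map_inv] at *
    exact (Subgroup.normal_subgroupOf_iff hAB).mp hn _ _ hh hk
  · rw [Subgroup.relIndex_comap, Subgroup.map_comap_eq_self_of_surjective hsurj, hr]

lemma step_map_subtype {G : Type*} [Group G] {p : ℕ} {H : Subgroup G} {P Q : Subgroup H}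
    (hPQ : P ≤ Q) (hn : (P.subgroupOf Q).Normal) (hr : P.relIndex Q = p) :
    P.map H.subtype ≤ Q.map H.subtype ∧
      ((P.map H.subtype).subgroupOf (Q.map H.subtype)).Normal ∧
      (P.map H.subtype).relIndex (Q.map H.subtype) = p := by
  refine ⟨Subgroup.map_mono hPQ, ?_, ?_⟩
  · rw [Subgroup.normal_subgroupOf_iff (Subgroup.map_mono hPQ)]
    rintro h k ⟨a, ha, rfl⟩ ⟨b, hb, rfl⟩
    exact ⟨b * a * b⁻¹, (Subgroup.normal_subgroupOf_iff hPQ).mp hn a b ha hb, rfl⟩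
  · have h := Subgroup.relIndex_comap (H := P.map H.subtype) H.subtype Q
    rw [Subgroup.comap_map_eq_self_of_injective H.subtype_injective P] at h
    rw [← h, hr]

lemma isPSubnormalIn_map_subtype {G : Type*} [Group G] {p : ℕ} {H : Subgroup G}
    {P Q : Subgroup H} (h : IsPSubnormalIn p P Q) :
    IsPSubnormalIn p (P.map H.subtype) (Q.map H.subtype) := by
  obtain ⟨t, f, h0, hlast, hstep⟩ := h
  refine ⟨t, fun i => (f i).map H.subtype, by simp only [h0], by simp only [hlast],
    fun i => ?_⟩
  obtain ⟨hle, hn, hr⟩ := hstep i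
  exact step_map_subtype hle hn hr

/-- The key chain construction: if `N ⊴ X` has `p`-group quotient and `N ≤ M`, then `M`
is `p`-subnormal in `⊤`. -/
lemma isPSubnormalIn_top_of_le {X : Type*} [Group X] [Finite X] {p : ℕ} (hp : p.Prime)
    {N M : Subgroup X} (hNnorm : N.Normal) (hNpg : IsPGroup p (X ⧸ N)) (hNM : N ≤ M) :
    IsPSubnormalIn p M (⊤ : Subgroup X) := by
  haveI : Fact p.Prime := ⟨hp⟩
  haveI := hNnorm
  suffices Hgen : ∀ n (M : Subgroup X), N ≤ M → M.index = n → IsPSubnormalIn p M ⊤ from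
    Hgen _ M hNM rfl
  intro n
  induction n using Nat.strong_induction_on with
  | _ n ih =>
    intro M hNM hn
    by_cases hM : M = (⊤ : Subgroup X)
    · subst hM; exact isPSubnormalIn_refl ⊤
    -- find the next step M'
    · have hstep : ∃ M' : Subgroup X, M ≤ M' ∧ (M.subgroupOf M').Normal ∧
          M.relIndex M' = p ∧ M'.index < M.index := by
        set π := QuotientGroup.mk' N with hπ
        have hπsurj : Function.Surjective π := QuotientGroup.mk'_surjective N
        set Q : Subgroup (X ⧸ N) := M.map π with hQdef
        have hQM : Q.comap π = M := by
          rw [hQdef, Subgroup.comap_map_eq, QuotientGroup.ker_mk', sup_eq_left.mpr hNM]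
        have hQne : Q ≠ ⊤ := by
          intro hQtop
          apply hM
          rw [← hQM, hQtop, Subgroup.comap_top]
        haveI : Group.IsNilpotent (X ⧸ N) := hNpg.isNilpotent
        have hnc : NormalizerCondition (X ⧸ N) := normalizerCondition_of_isNilpotent
        have hQlt : Q < Subgroup.normalizer (Q : Set (X ⧸ N)) := hnc Q (lt_top_iff_ne_top.mpr hQne)
        set Nq := Subgroup.normalizer (Q : Set (X ⧸ N)) with hNq
        set q : Subgroup Nq := Q.subgroupOf Nq with hq
        haveI hqnorm : q.Normal := Subgroup.normal_in_normalizer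
        have hqne : q ≠ ⊤ := by
          intro hqt
          exact hQlt.ne' (le_antisymm (Subgroup.subgroupOf_eq_top.mp hqt) Subgroup.le_normalizer)
        -- the quotient Nq ⧸ q is a nontrivial p-group
        have hW : IsPGroup p (Nq ⧸ q) := (hNpg.to_subgroup Nq).to_quotient q
        have hpdvd : p ∣ Nat.card (Nq ⧸ q) := by
          rcases hW.card_eq_or_dvd with h1 | h1
          · exact absurd (Subgroup.index_eq_one.mp h1) hqne
          · exact h1
        obtain ⟨x, hx⟩ := exists_prime_orderOf_dvd_card' (G := Nq ⧸ q) p hpdvd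
        set Q' : Subgroup Nq := (Subgroup.zpowers x).comap (QuotientGroup.mk' q) with hQ'
        have hqQ' : q ≤ Q' := fun y hy => by
          have h1 : QuotientGroup.mk' q y = 1 := (QuotientGroup.eq_one_iff y).mpr hy
          rw [hQ', Subgroup.mem_comap, h1]
          exact Subgroup.one_mem _
        have hqQ'norm : (q.subgroupOf Q').Normal := by
          rw [Subgroup.normal_subgroupOf_iff hqQ']
          exact fun a b ha _ => hqnorm.conj_mem a ha b
        have hqQ'rel : q.relIndex Q' = p := by
          have e : ((⊥ : Subgroup (↥Nq ⧸ q)).comap (QuotientGroup.mk' q)) = q := by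
            rw [MonoidHom.comap_bot, QuotientGroup.ker_mk']
          calc q.relIndex Q'
              = ((⊥ : Subgroup (↥Nq ⧸ q)).comap (QuotientGroup.mk' q)).relIndex Q' := by
                rw [e]
            _ = (⊥ : Subgroup (↥Nq ⧸ q)).relIndex (Q'.map (QuotientGroup.mk' q)) :=
                Subgroup.relIndex_comap _ _ _
            _ = Nat.card (Q'.map (QuotientGroup.mk' q)) := Subgroup.relIndex_bot_left _
            _ = p := by
                rw [hQ', Subgroup.map_comap_eq_self_of_surjective
                  (QuotientGroup.mk'_surjective _), Nat.card_zpowers, hx]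
        -- transfer from Nq to X ⧸ N and then to X
        obtain ⟨hle1, hn1, hr1⟩ := step_map_subtype (p := p) hqQ' hqQ'norm hqQ'rel
        have hmapq : q.map Nq.subtype = Q := by
          rw [hq, Subgroup.subgroupOf_map_subtype, inf_eq_left.mpr Subgroup.le_normalizer]
        rw [hmapq] at hle1 hn1 hr1
        obtain ⟨hle2, hn2, hr2⟩ := step_comap (p := p) π hπsurj hle1 hn1 hr1
        rw [hQM] at hle2 hn2 hr2
        refine ⟨(Q'.map Nq.subtype).comap π, hle2, hn2, hr2, ?_⟩
        have hindex : M.relIndex ((Q'.map Nq.subtype).comap π) *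
            ((Q'.map Nq.subtype).comap π).index = M.index :=
          Subgroup.relIndex_mul_index hle2
        have hpos : 0 < ((Q'.map Nq.subtype).comap π).index :=
          Nat.pos_of_ne_zero (Subgroup.index_ne_zero_of_finite)
        calc ((Q'.map Nq.subtype).comap π).index
            = 1 * ((Q'.map Nq.subtype).comap π).index := (one_mul _).symm
          _ < M.relIndex ((Q'.map Nq.subtype).comap π) *
              ((Q'.map Nq.subtype).comap π).index :=
              (Nat.mul_lt_mul_right hpos).mpr (by rw [hr2]; exact hp.one_lt)
          _ = M.index := hindex
      obtain ⟨M', hMM', hnorm', hrel', hlt'⟩ := hstep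
      exact isPSubnormalIn_cons hMM' hnorm' hrel'
        (ih M'.index (hn ▸ hlt') M' (hNM.trans hMM') rfl)

lemma subnormal_of_residual_le {G : Type*} [Group G] [Finite G] {p : ℕ} (hp : p.Prime)
    {H L : Subgroup G} (hLH : L ≤ H) (hres : pResidualIn p H ≤ L) : IsPSubnormalIn p L H := by
  have hN : pResidual p H ≤ L.subgroupOf H := Subgroup.map_le_iff_le_comap.mp hres
  rw [pResidual_eq_closure hp] at hN
  have hNnorm : (Subgroup.closure (pPrimeSet p ↥H)).Normal := normal_closure_pPrimeSet
  have hNpg : letI := hNnorm; IsPGroup p (↥H ⧸ Subgroup.closure (pPrimeSet p ↥H)) :=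
    isPGroup_quotient_closure_pPrimeSet hp
  have hchain : IsPSubnormalIn p (L.subgroupOf H) (⊤ : Subgroup H) :=
    isPSubnormalIn_top_of_le hp hNnorm hNpg hN
  have := isPSubnormalIn_map_subtype hchain
  rwa [Subgroup.subgroupOf_map_subtype, inf_eq_left.mpr hLH,
    ← MonoidHom.range_eq_map, Subgroup.range_subtype] at this

end Aux

/-- For a finite group `G`, a prime `p` and subgroups `H, K ≤ G`, the
intersection `H ⊓ K` is a `p`-subnormal subgroup of both `H` and `K` if and only if
`O^p(H) = O^p(K)` as subgroups of `G`. -/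
theorem stmt3 (G : Type*) [Group G] [Finite G] (p : ℕ) (hp : p.Prime) (H K : Subgroup G) :
    (IsPSubnormalIn p (H ⊓ K) H ∧ IsPSubnormalIn p (H ⊓ K) K) ↔
      pResidualIn p H = pResidualIn p K := by
  constructor
  · rintro ⟨h1, h2⟩
    rw [← pResidualIn_eq_of_subnormal hp h1, ← pResidualIn_eq_of_subnormal hp h2]
  · intro heq
    have h1 : pResidualIn p H ≤ H ⊓ K :=
      le_inf (Subgroup.map_subtype_le _) (heq ▸ Subgroup.map_subtype_le _)
    have h2 : pResidualIn p K ≤ H ⊓ K := heq ▸ h1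
    exact ⟨subnormal_of_residual_le hp inf_le_left h1,
      subnormal_of_residual_le hp inf_le_right h2⟩
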